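/- arXiv:1204.4763 — 2 statements merged into one kernel-verified Lean document; each statement's English description precedes it below -/
import Mathlib

section
/- Let u ⊆ {1,…,d} and let v, v' be two subsets of the complement u^c. Let x, y, w, z be independent random vectors, each uniformly distributed on [0,1]^d. Then E[ (f(x) − f(x_v : z_{-v})) · (f(x_u : y_{-u}) − f(y_{v'} : w_{-v'})) ] = τ̲²_u. -/
open MeasureTheory Finset

/-- The uniform (Lebesgue) probability measure on the interval `[0,1]`. -/
noncomputable def unifSeg : Measure ℝ := (volume : Measure ℝ).restrict (Set.Icc 0 1)

/-- The uniform (Lebesgue) product probability measure on the cube `[0,1]^d`. -/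
noncomputable def unifCube (d : ℕ) : Measure (Fin d → ℝ) :=
  Measure.pi fun _ => unifSeg

/-- `glue u x y` is the point whose `j`-th coordinate is `x j` for `j ∈ u`
and `y j` otherwise, i.e. `(x_u : y_{-u})`. -/
def glue {d : ℕ} (u : Finset (Fin d)) (x y : Fin d → ℝ) : Fin d → ℝ :=
  fun j => if j ∈ u then x j else y j

/-- The lower Sobol' index `τ̲²_u` of the set `u`. -/
noncomputable def lowerSobol {d : ℕ} (f : (Fin d → ℝ) → ℝ) (u : Finset (Fin d)) : ℝ :=
  (∫ x, (∫ y, f (glue u x y) ∂(unifCube d)) ^ 2 ∂(unifCube d))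
    - (∫ x, f x ∂(unifCube d)) ^ 2

/-- The variance `σ²` of `f` over the unit cube. -/
noncomputable def sigmaSq {d : ℕ} (f : (Fin d → ℝ) → ℝ) : ℝ :=
  (∫ x, f x ^ 2 ∂(unifCube d)) - (∫ x, f x ∂(unifCube d)) ^ 2

/-- The upper Sobol' index `τ̄²_u = σ² - τ̲²_{uᶜ}` of the set `u`. -/
noncomputable def upperSobol {d : ℕ} (f : (Fin d → ℝ) → ℝ) (u : Finset (Fin d)) : ℝ :=
  sigmaSq f - lowerSobol f uᶜ

instance : IsProbabilityMeasure unifSeg := ⟨by simp [unifSeg]⟩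
instance (d : ℕ) : IsProbabilityMeasure (unifCube d) := by
  unfold unifCube; infer_instance

section
variable {d : ℕ}

lemma mp_fst' {α β : Type*} [MeasurableSpace α] [MeasurableSpace β] (μ : Measure α)
    (ν : Measure β) [SFinite ν] [IsProbabilityMeasure ν] :
    MeasurePreserving (Prod.fst : α × β → α) (μ.prod ν) μ :=
  ⟨measurable_fst, Measure.fst_prod⟩

lemma mp_snd' {α β : Type*} [MeasurableSpace α] [MeasurableSpace β] (μ : Measure α)
    (ν : Measure β) [SFinite ν] [SFinite μ] [IsProbabilityMeasure μ] :
    MeasurePreserving (Prod.snd : α × β → β) (μ.prod ν) ν :=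
  ⟨measurable_snd, Measure.snd_prod⟩

lemma gluePres (u : Finset (Fin d)) :
    MeasurePreserving (fun p : (Fin d → ℝ) × (Fin d → ℝ) => glue u p.1 p.2)
      ((unifCube d).prod (unifCube d)) (unifCube d) := by
  classical
  set e := MeasurableEquiv.piEquivPiSubtypeProd (fun _ : Fin d => ℝ) (· ∈ u) with he
  have hmp := measurePreserving_piEquivPiSubtypeProd (fun _ : Fin d => unifSeg) (· ∈ u)
  have h1 := (mp_fst' _ _).comp hmp
  have h2 := (mp_snd' _ _).comp hmp
  have h3 := (hmp.symm e).comp (h1.prod h2)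
  have : (⇑e.symm ∘ Prod.map (Prod.fst ∘ ⇑e) (Prod.snd ∘ ⇑e)) =
      (fun p : (Fin d → ℝ) × (Fin d → ℝ) => glue u p.1 p.2) := by
    funext p
    simp only [Function.comp_apply, Prod.map]
    funext j
    by_cases h : j ∈ u <;>
      simp [he, MeasurableEquiv.piEquivPiSubtypeProd, glue, h,
        Equiv.piEquivPiSubtypeProd_symm_apply, Equiv.piEquivPiSubtypeProd]
  exact this ▸ h3

end

lemma mpCongr {α β : Type*} [MeasurableSpace α] [MeasurableSpace β] {μ : Measure α}
    {ν : Measure β} {f g : α → β} (h : MeasurePreserving f μ ν) (he : g = f) :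
    MeasurePreserving g μ ν := he ▸ h

section shuffle
variable {α β γ δ : Type*} [MeasurableSpace α] [MeasurableSpace β] [MeasurableSpace γ]
  [MeasurableSpace δ] (μa : Measure α) (μb : Measure β) (μc : Measure γ) (μd : Measure δ)
  [SFinite μa] [SFinite μb] [SFinite μc] [SFinite μd]

lemma mp_shuffle :
    MeasurePreserving (fun p : (α × β) × (γ × δ) => ((p.1.1, p.2.1), (p.1.2, p.2.2)))
      ((μa.prod μb).prod (μc.prod μd)) ((μa.prod μc).prod (μb.prod μd)) := by
  have A1 := measurePreserving_prodAssoc μa μb (μc.prod μd)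
  have A2 := (measurePreserving_prodAssoc μb μc μd).symm MeasurableEquiv.prodAssoc
  have sw := (Measure.measurePreserving_swap (μ := μb) (ν := μc)).prod (MeasurePreserving.id μd)
  have A3 := measurePreserving_prodAssoc μc μb μd
  have inner := A3.comp (sw.comp A2)
  have idinner := (MeasurePreserving.id μa).prod inner
  have A4 := (measurePreserving_prodAssoc μa μc (μb.prod μd)).symm MeasurableEquiv.prodAssoc
  have total := A4.comp (idinner.comp A1)
  exact mpCongr total (by funext p; rfl)

end shuffle

lemma mulL2 {α : Type*} [MeasurableSpace α] {Q : Measure α} {F G : α → ℝ}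
    (hF : MemLp F 2 Q) (hG : MemLp G 2 Q) : Integrable (fun x => F x * G x) Q := by
  have h := hG.smul (φ := F) hF (r := 1) (hpqr := ⟨by norm_num [ENNReal.inv_two_add_inv_two]⟩)
  rw [← memLp_one_iff_integrable]
  exact h

lemma integral_comp_mp {α β : Type*} [MeasurableSpace α] [MeasurableSpace β] {μ : Measure α}
    {ν : Measure β} {T : α → β} (hT : MeasurePreserving T μ ν) {g : β → ℝ}
    (hg : AEStronglyMeasurable g ν) : ∫ x, g (T x) ∂μ = ∫ y, g y ∂ν := by
  rw [← hT.map_eq] at hg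
  rw [← hT.map_eq, integral_map hT.measurable.aemeasurable hg]

lemma glue_glue_left {d : ℕ} (u : Finset (Fin d)) (a b y : Fin d → ℝ) :
    glue u (glue u a b) y = glue u a y := by
  funext j; by_cases h : j ∈ u <;> simp [glue, h]

lemma glue_glue_compl {d : ℕ} {u v : Finset (Fin d)} (hv : v ⊆ uᶜ) (a b z : Fin d → ℝ) :
    glue v (glue u a b) z = glue v b z := by
  funext j; by_cases h : j ∈ v
  · have hu : j ∉ u := Finset.mem_compl.mp (hv h)
    simp [glue, h, hu]
  · simp [glue, h]

theorem stmt0 {d : ℕ} (hd : 1 ≤ d) (f : (Fin d → ℝ) → ℝ)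
    (hf : MemLp f 2 (unifCube d))
    (u v v' : Finset (Fin d)) (hv : v ⊆ uᶜ) (hv' : v' ⊆ uᶜ) :
    (∫ x, ∫ y, ∫ z, ∫ w,
        (f x - f (glue v x z)) * (f (glue u x y) - f (glue v' y w))
        ∂(unifCube d) ∂(unifCube d) ∂(unifCube d) ∂(unifCube d))
      = lowerSobol f u := by

  classical
  -- building-block measure preserving maps
  have idP := MeasurePreserving.id (unifCube d)
  have mpP_A := mp_fst' (unifCube d) ((unifCube d).prod ((unifCube d).prod (unifCube d)))
  have mpxy : MeasurePreserving
      (fun ω : ((Fin d → ℝ)) × (((Fin d → ℝ)) × (((Fin d → ℝ)) × ((Fin d → ℝ)))) => (ω.1, ω.2.1))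
      ((unifCube d).prod ((unifCube d).prod ((unifCube d).prod (unifCube d)))) ((unifCube d).prod (unifCube d)) :=
    idP.prod (mp_fst' (unifCube d) ((unifCube d).prod (unifCube d)))
  have mpxz : MeasurePreserving
      (fun ω : ((Fin d → ℝ)) × (((Fin d → ℝ)) × (((Fin d → ℝ)) × ((Fin d → ℝ)))) => (ω.1, ω.2.2.1))
      ((unifCube d).prod ((unifCube d).prod ((unifCube d).prod (unifCube d)))) ((unifCube d).prod (unifCube d)) :=
    idP.prod ((mp_fst' (unifCube d) (unifCube d)).comp (mp_snd' (unifCube d) ((unifCube d).prod (unifCube d))))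
  have mpyw : MeasurePreserving
      (fun ω : ((Fin d → ℝ)) × (((Fin d → ℝ)) × (((Fin d → ℝ)) × ((Fin d → ℝ)))) => (ω.2.1, ω.2.2.2))
      ((unifCube d).prod ((unifCube d).prod ((unifCube d).prod (unifCube d)))) ((unifCube d).prod (unifCube d)) :=
    (idP.prod (mp_snd' (unifCube d) (unifCube d))).comp (mp_snd' (unifCube d) ((unifCube d).prod ((unifCube d).prod (unifCube d))))
  have m3mp : MeasurePreserving
      (fun ω : ((Fin d → ℝ)) × (((Fin d → ℝ)) × (((Fin d → ℝ)) × ((Fin d → ℝ)))) => (ω.1, (ω.2.1, ω.2.2.1)))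
      ((unifCube d).prod ((unifCube d).prod ((unifCube d).prod (unifCube d)))) ((unifCube d).prod ((unifCube d).prod (unifCube d))) :=
    idP.prod (idP.prod (mp_fst' (unifCube d) (unifCube d)))
  have mACmp : MeasurePreserving
      (fun ω : ((Fin d → ℝ)) × (((Fin d → ℝ)) × (((Fin d → ℝ)) × ((Fin d → ℝ)))) => (ω.1, (ω.2.1, ω.2.2.2)))
      ((unifCube d).prod ((unifCube d).prod ((unifCube d).prod (unifCube d)))) ((unifCube d).prod ((unifCube d).prod (unifCube d))) :=
    idP.prod (idP.prod (mp_snd' (unifCube d) (unifCube d)))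
  have mpA : MeasurePreserving (fun ω : ((Fin d → ℝ)) × (((Fin d → ℝ)) × (((Fin d → ℝ)) × ((Fin d → ℝ)))) => ω.1)
      ((unifCube d).prod ((unifCube d).prod ((unifCube d).prod (unifCube d)))) (unifCube d) := mpP_A
  have mpB : MeasurePreserving (fun ω : ((Fin d → ℝ)) × (((Fin d → ℝ)) × (((Fin d → ℝ)) × ((Fin d → ℝ)))) => glue u ω.1 ω.2.1)
      ((unifCube d).prod ((unifCube d).prod ((unifCube d).prod (unifCube d)))) (unifCube d) := (gluePres u).comp mpxy
  have mpD : MeasurePreserving (fun ω : ((Fin d → ℝ)) × (((Fin d → ℝ)) × (((Fin d → ℝ)) × ((Fin d → ℝ)))) => glue v ω.1 ω.2.2.1)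
      ((unifCube d).prod ((unifCube d).prod ((unifCube d).prod (unifCube d)))) (unifCube d) := (gluePres v).comp mpxz
  have mpC : MeasurePreserving (fun ω : ((Fin d → ℝ)) × (((Fin d → ℝ)) × (((Fin d → ℝ)) × ((Fin d → ℝ)))) => glue v' ω.2.1 ω.2.2.2)
      ((unifCube d).prod ((unifCube d).prod ((unifCube d).prod (unifCube d)))) (unifCube d) := (gluePres v').comp mpyw
  -- L² membership of the four factors
  have hA := hf.comp_measurePreserving mpA
  have hB := hf.comp_measurePreserving mpB
  have hC := hf.comp_measurePreserving mpC
  have hD := hf.comp_measurePreserving mpD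
  -- integrability of the four cross terms
  have hABi : Integrable (fun ω : ((Fin d → ℝ)) × (((Fin d → ℝ)) × (((Fin d → ℝ)) × ((Fin d → ℝ)))) =>
      f ω.1 * f (glue u ω.1 ω.2.1)) ((unifCube d).prod ((unifCube d).prod ((unifCube d).prod (unifCube d)))) := mulL2 hA hB
  have hACi : Integrable (fun ω : ((Fin d → ℝ)) × (((Fin d → ℝ)) × (((Fin d → ℝ)) × ((Fin d → ℝ)))) =>
      f ω.1 * f (glue v' ω.2.1 ω.2.2.2)) ((unifCube d).prod ((unifCube d).prod ((unifCube d).prod (unifCube d)))) := mulL2 hA hC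
  have hDBi : Integrable (fun ω : ((Fin d → ℝ)) × (((Fin d → ℝ)) × (((Fin d → ℝ)) × ((Fin d → ℝ)))) =>
      f (glue v ω.1 ω.2.2.1) * f (glue u ω.1 ω.2.1)) ((unifCube d).prod ((unifCube d).prod ((unifCube d).prod (unifCube d)))) :=
    mulL2 hD hB
  have hDCi : Integrable (fun ω : ((Fin d → ℝ)) × (((Fin d → ℝ)) × (((Fin d → ℝ)) × ((Fin d → ℝ)))) =>
      f (glue v ω.1 ω.2.2.1) * f (glue v' ω.2.1 ω.2.2.2)) ((unifCube d).prod ((unifCube d).prod ((unifCube d).prod (unifCube d)))) :=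
    mulL2 hD hC
  have hFi : Integrable (fun ω : ((Fin d → ℝ)) × (((Fin d → ℝ)) × (((Fin d → ℝ)) × ((Fin d → ℝ)))) =>
      (f ω.1 - f (glue v ω.1 ω.2.2.1)) * (f (glue u ω.1 ω.2.1) - f (glue v' ω.2.1 ω.2.2.2)))
      ((unifCube d).prod ((unifCube d).prod ((unifCube d).prod (unifCube d)))) := mulL2 (hA.sub hD) (hB.sub hC)
  -- step 1 : the iterated integral equals an integral over the product space
  have hiter : (∫ ω, (f ω.1 - f (glue v ω.1 ω.2.2.1)) *
        (f (glue u ω.1 ω.2.1) - f (glue v' ω.2.1 ω.2.2.2))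
        ∂((unifCube d).prod ((unifCube d).prod ((unifCube d).prod (unifCube d)))))
      = ∫ x, ∫ y, ∫ z, ∫ w,
          (f x - f (glue v x z)) * (f (glue u x y) - f (glue v' y w))
          ∂(unifCube d) ∂(unifCube d) ∂(unifCube d) ∂(unifCube d) := by
    rw [integral_prod _ hFi]
    refine integral_congr_ae ?_
    filter_upwards [hFi.prod_right_ae] with x hx
    rw [integral_prod _ hx]
    refine integral_congr_ae ?_
    filter_upwards [hx.prod_right_ae] with y hy
    rw [integral_prod _ hy]
  rw [← hiter]
  -- step 2 : expand the product
  have hexp : (∫ ω, (f ω.1 - f (glue v ω.1 ω.2.2.1)) *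
        (f (glue u ω.1 ω.2.1) - f (glue v' ω.2.1 ω.2.2.2))
        ∂((unifCube d).prod ((unifCube d).prod ((unifCube d).prod (unifCube d)))))
      = ((∫ ω, f ω.1 * f (glue u ω.1 ω.2.1) ∂((unifCube d).prod ((unifCube d).prod ((unifCube d).prod (unifCube d)))))
          - ∫ ω, f ω.1 * f (glue v' ω.2.1 ω.2.2.2) ∂((unifCube d).prod ((unifCube d).prod ((unifCube d).prod (unifCube d)))))
        - ((∫ ω, f (glue v ω.1 ω.2.2.1) * f (glue u ω.1 ω.2.1)
              ∂((unifCube d).prod ((unifCube d).prod ((unifCube d).prod (unifCube d)))))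
          - ∫ ω, f (glue v ω.1 ω.2.2.1) * f (glue v' ω.2.1 ω.2.2.2)
              ∂((unifCube d).prod ((unifCube d).prod ((unifCube d).prod (unifCube d))))) := by
    calc (∫ ω, (f ω.1 - f (glue v ω.1 ω.2.2.1)) *
        (f (glue u ω.1 ω.2.1) - f (glue v' ω.2.1 ω.2.2.2))
        ∂((unifCube d).prod ((unifCube d).prod ((unifCube d).prod (unifCube d)))))
        = ∫ ω, (f ω.1 * f (glue u ω.1 ω.2.1) - f ω.1 * f (glue v' ω.2.1 ω.2.2.2))
            - (f (glue v ω.1 ω.2.2.1) * f (glue u ω.1 ω.2.1)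
              - f (glue v ω.1 ω.2.2.1) * f (glue v' ω.2.1 ω.2.2.2))
            ∂((unifCube d).prod ((unifCube d).prod ((unifCube d).prod (unifCube d)))) :=
          integral_congr_ae (Filter.Eventually.of_forall fun ω => by ring)
      _ = (∫ ω, f ω.1 * f (glue u ω.1 ω.2.1) - f ω.1 * f (glue v' ω.2.1 ω.2.2.2)
            ∂((unifCube d).prod ((unifCube d).prod ((unifCube d).prod (unifCube d)))))
          - ∫ ω, f (glue v ω.1 ω.2.2.1) * f (glue u ω.1 ω.2.1)
              - f (glue v ω.1 ω.2.2.1) * f (glue v' ω.2.1 ω.2.2.2)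
              ∂((unifCube d).prod ((unifCube d).prod ((unifCube d).prod (unifCube d)))) :=
          integral_sub (hABi.sub hACi) (hDBi.sub hDCi)
      _ = _ := by
          rw [integral_sub hABi hACi, integral_sub hDBi hDCi]
  rw [hexp]
  -- common evaluation : integral of f ∘ glue over a product is the mean
  have gint : ∀ w : Finset (Fin d),
      (∫ p : ((Fin d → ℝ)) × ((Fin d → ℝ)), f (glue w p.1 p.2) ∂((unifCube d).prod (unifCube d))) = ∫ x, f x ∂(unifCube d) :=
    fun w => integral_comp_mp (gluePres w) hf.1
  -- step 3a : the AB term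
  have aG2 : AEStronglyMeasurable (fun p : ((Fin d → ℝ)) × ((Fin d → ℝ)) => f p.1 * f (glue u p.1 p.2))
      ((unifCube d).prod (unifCube d)) :=
    (hf.1.comp_quasiMeasurePreserving (mp_fst' (unifCube d) (unifCube d)).quasiMeasurePreserving).mul
      (hf.1.comp_quasiMeasurePreserving (gluePres u).quasiMeasurePreserving)
  have hABv : (∫ ω, f ω.1 * f (glue u ω.1 ω.2.1) ∂((unifCube d).prod ((unifCube d).prod ((unifCube d).prod (unifCube d)))))
      = ∫ x, (∫ y, f (glue u x y) ∂(unifCube d)) ^ 2 ∂(unifCube d) := by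
    have mpPhi : MeasurePreserving
        (fun r : ((Fin d → ℝ)) × (((Fin d → ℝ)) × ((Fin d → ℝ))) => (glue u r.1 r.2.1, r.2.2))
        ((unifCube d).prod ((unifCube d).prod (unifCube d))) ((unifCube d).prod (unifCube d)) :=
      ((gluePres u).prod idP).comp
        ((measurePreserving_prodAssoc (unifCube d) (unifCube d) (unifCube d)).symm MeasurableEquiv.prodAssoc)
    have T1 : MeasurePreserving (fun r : ((Fin d → ℝ)) × (((Fin d → ℝ)) × ((Fin d → ℝ))) => glue u r.1 r.2.1)
        ((unifCube d).prod ((unifCube d).prod (unifCube d))) (unifCube d) :=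
      (gluePres u).comp (idP.prod (mp_fst' (unifCube d) (unifCube d)))
    have T2 : MeasurePreserving (fun r : ((Fin d → ℝ)) × (((Fin d → ℝ)) × ((Fin d → ℝ))) => glue u r.1 r.2.2)
        ((unifCube d).prod ((unifCube d).prod (unifCube d))) (unifCube d) :=
      (gluePres u).comp (idP.prod (mp_snd' (unifCube d) (unifCube d)))
    have hint : Integrable (fun r : ((Fin d → ℝ)) × (((Fin d → ℝ)) × ((Fin d → ℝ))) =>
        f (glue u r.1 r.2.1) * f (glue u r.1 r.2.2)) ((unifCube d).prod ((unifCube d).prod (unifCube d))) :=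
      mulL2 (hf.comp_measurePreserving T1) (hf.comp_measurePreserving T2)
    calc (∫ ω, f ω.1 * f (glue u ω.1 ω.2.1) ∂((unifCube d).prod ((unifCube d).prod ((unifCube d).prod (unifCube d)))))
        = ∫ p, f p.1 * f (glue u p.1 p.2) ∂((unifCube d).prod (unifCube d)) := integral_comp_mp mpxy aG2
      _ = ∫ r, f (glue u r.1 r.2.1) * f (glue u (glue u r.1 r.2.1) r.2.2)
            ∂((unifCube d).prod ((unifCube d).prod (unifCube d))) := (integral_comp_mp mpPhi aG2).symm
      _ = ∫ r, f (glue u r.1 r.2.1) * f (glue u r.1 r.2.2) ∂((unifCube d).prod ((unifCube d).prod (unifCube d))) :=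
          integral_congr_ae (Filter.Eventually.of_forall fun r => by simp only [glue_glue_left])
      _ = ∫ a, ∫ q, f (glue u a q.1) * f (glue u a q.2) ∂((unifCube d).prod (unifCube d)) ∂(unifCube d) :=
          integral_prod _ hint
      _ = ∫ x, (∫ y, f (glue u x y) ∂(unifCube d)) ^ 2 ∂(unifCube d) :=
          integral_congr_ae (Filter.Eventually.of_forall fun a =>
            (integral_prod_mul (fun b => f (glue u a b)) (fun y => f (glue u a y))).trans
              (pow_two (∫ y, f (glue u a y) ∂(unifCube d))).symm)
  -- step 3b : the AC term
  have aAC : AEStronglyMeasurable (fun p : ((Fin d → ℝ)) × (((Fin d → ℝ)) × ((Fin d → ℝ))) => f p.1 * f (glue v' p.2.1 p.2.2))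
      ((unifCube d).prod ((unifCube d).prod (unifCube d))) :=
    (hf.1.comp_quasiMeasurePreserving
        (mp_fst' (unifCube d) ((unifCube d).prod (unifCube d))).quasiMeasurePreserving).mul
      (hf.1.comp_quasiMeasurePreserving
        ((gluePres v').comp (mp_snd' (unifCube d) ((unifCube d).prod (unifCube d)))).quasiMeasurePreserving)
  have hACv : (∫ ω, f ω.1 * f (glue v' ω.2.1 ω.2.2.2) ∂((unifCube d).prod ((unifCube d).prod ((unifCube d).prod (unifCube d)))))
      = (∫ x, f x ∂(unifCube d)) * ∫ x, f x ∂(unifCube d) :=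
    (integral_comp_mp mACmp aAC).trans
      ((integral_prod_mul f (fun q : ((Fin d → ℝ)) × ((Fin d → ℝ)) => f (glue v' q.1 q.2))).trans
        (by rw [gint v']))
  -- step 3c : the DB term
  have aG3 : AEStronglyMeasurable
      (fun p : ((Fin d → ℝ)) × (((Fin d → ℝ)) × ((Fin d → ℝ))) => f (glue v p.1 p.2.2) * f (glue u p.1 p.2.1))
      ((unifCube d).prod ((unifCube d).prod (unifCube d))) :=
    (hf.1.comp_quasiMeasurePreserving
        ((gluePres v).comp (idP.prod (mp_snd' (unifCube d) (unifCube d)))).quasiMeasurePreserving).mul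
      (hf.1.comp_quasiMeasurePreserving
        ((gluePres u).comp (idP.prod (mp_fst' (unifCube d) (unifCube d)))).quasiMeasurePreserving)
  have hDBv : (∫ ω, f (glue v ω.1 ω.2.2.1) * f (glue u ω.1 ω.2.1)
        ∂((unifCube d).prod ((unifCube d).prod ((unifCube d).prod (unifCube d)))))
      = (∫ x, f x ∂(unifCube d)) * ∫ x, f x ∂(unifCube d) := by
    have mpSDB : MeasurePreserving
        (fun q : (((Fin d → ℝ)) × ((Fin d → ℝ))) × (((Fin d → ℝ)) × ((Fin d → ℝ))) => (glue u q.1.1 q.2.1, (q.1.2, q.2.2)))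
        (((unifCube d).prod (unifCube d)).prod ((unifCube d).prod (unifCube d))) ((unifCube d).prod ((unifCube d).prod (unifCube d))) :=
      ((gluePres u).prod (MeasurePreserving.id ((unifCube d).prod (unifCube d)))).comp
        (mp_shuffle (unifCube d) (unifCube d) (unifCube d) (unifCube d))
    calc (∫ ω, f (glue v ω.1 ω.2.2.1) * f (glue u ω.1 ω.2.1)
          ∂((unifCube d).prod ((unifCube d).prod ((unifCube d).prod (unifCube d)))))
        = ∫ p, f (glue v p.1 p.2.2) * f (glue u p.1 p.2.1) ∂((unifCube d).prod ((unifCube d).prod (unifCube d))) :=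
          integral_comp_mp m3mp aG3
      _ = ∫ q, f (glue v (glue u q.1.1 q.2.1) q.2.2) * f (glue u (glue u q.1.1 q.2.1) q.1.2)
            ∂(((unifCube d).prod (unifCube d)).prod ((unifCube d).prod (unifCube d))) := (integral_comp_mp mpSDB aG3).symm
      _ = ∫ q, f (glue u q.1.1 q.1.2) * f (glue v q.2.1 q.2.2)
            ∂(((unifCube d).prod (unifCube d)).prod ((unifCube d).prod (unifCube d))) :=
          integral_congr_ae (Filter.Eventually.of_forall fun q => by
            simp only [glue_glue_compl hv, glue_glue_left]; ring)
      _ = (∫ x, f x ∂(unifCube d)) * ∫ x, f x ∂(unifCube d) :=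
          (integral_prod_mul (fun p : ((Fin d → ℝ)) × ((Fin d → ℝ)) => f (glue u p.1 p.2))
            (fun p : ((Fin d → ℝ)) × ((Fin d → ℝ)) => f (glue v p.1 p.2))).trans (by rw [gint u, gint v])
  -- step 3d : the DC term
  have aDC : AEStronglyMeasurable
      (fun ω : ((Fin d → ℝ)) × (((Fin d → ℝ)) × (((Fin d → ℝ)) × ((Fin d → ℝ)))) => f (glue v ω.1 ω.2.2.1) * f (glue v' ω.2.1 ω.2.2.2))
      ((unifCube d).prod ((unifCube d).prod ((unifCube d).prod (unifCube d)))) :=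
    (hf.1.comp_quasiMeasurePreserving mpD.quasiMeasurePreserving).mul
      (hf.1.comp_quasiMeasurePreserving mpC.quasiMeasurePreserving)
  have hDCv : (∫ ω, f (glue v ω.1 ω.2.2.1) * f (glue v' ω.2.1 ω.2.2.2)
        ∂((unifCube d).prod ((unifCube d).prod ((unifCube d).prod (unifCube d)))))
      = (∫ x, f x ∂(unifCube d)) * ∫ x, f x ∂(unifCube d) := by
    have mpSDC : MeasurePreserving
        (fun q : (((Fin d → ℝ)) × ((Fin d → ℝ))) × (((Fin d → ℝ)) × ((Fin d → ℝ))) => (q.1.1, (q.2.1, (q.1.2, q.2.2))))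
        (((unifCube d).prod (unifCube d)).prod ((unifCube d).prod (unifCube d))) ((unifCube d).prod ((unifCube d).prod ((unifCube d).prod (unifCube d)))) :=
      (measurePreserving_prodAssoc (unifCube d) (unifCube d) ((unifCube d).prod (unifCube d))).comp (mp_shuffle (unifCube d) (unifCube d) (unifCube d) (unifCube d))
    calc (∫ ω, f (glue v ω.1 ω.2.2.1) * f (glue v' ω.2.1 ω.2.2.2)
          ∂((unifCube d).prod ((unifCube d).prod ((unifCube d).prod (unifCube d)))))
        = ∫ q, f (glue v q.1.1 q.1.2) * f (glue v' q.2.1 q.2.2)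
            ∂(((unifCube d).prod (unifCube d)).prod ((unifCube d).prod (unifCube d))) := (integral_comp_mp mpSDC aDC).symm
      _ = (∫ x, f x ∂(unifCube d)) * ∫ x, f x ∂(unifCube d) :=
          (integral_prod_mul (fun p : ((Fin d → ℝ)) × ((Fin d → ℝ)) => f (glue v p.1 p.2))
            (fun p : ((Fin d → ℝ)) × ((Fin d → ℝ)) => f (glue v' p.1 p.2))).trans (by rw [gint v, gint v'])
  rw [hABv, hACv, hDBv, hDCv, lowerSobol]
  ring
end

section
/- Let f(x) = ∏_{j=1}^d h_j(x_j) be of product form with each ∫_0^1 h_j(t)^4 dt < ∞. Let u ⊆ {1,…,d} and v, v' ⊆ u^c, and let (x_i, y_i, z_i, w_i), i = 1,…,n, be i.i.d. with all four components independent and uniform on [0,1]^d. Define the estimator τ̂²_u = (1/n) Σ_{i=1}^n (f(x_i) − f(x_{i,v} : z_{i,-v})) (f(x_{i,u} : y_{i,-u}) − f(y_{i,v'} : w_{i,-v'})). Then n · Var(τ̂²_u) = E[ Q_v · Q_{u v'} ] − (τ̲²_u)², where for independent uniform x, y, z, w on [0,1]^d: Q_v = ∏_{j=1}^d h_j(x_j)²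 + ∏_{j∈v} h_j(x_j)² ∏_{j∉v} h_j(z_j)² − 2 ∏_{j∈v} h_j(x_j)² ∏_{j∉v} h_j(x_j) h_j(z_j), and Q_{u v'} = ∏_{j∈u} h_j(x_j)² ∏_{j∉u} h_j(y_j)² + ∏_{j∈v'} h_j(y_j)² ∏_{j∉v'} h_j(w_j)² − 2 ∏_{j∈u} h_j(x_j) h_j(w_j) ∏_{j∈v'} h_j(y_j)² ∏_{j∈u^c ∩ v'^c} h_j(y_j) h_j(w_j). -/
open MeasureTheory Finset

open ProbabilityTheory

/-! ### Auxiliary material -/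

instance inst_s3 : IsProbabilityMeasure unifSeg := by
  constructor
  rw [unifSeg, Measure.restrict_apply_univ, Real.volume_Icc]; norm_num

instance inst_s3_2 (d : ℕ) : IsProbabilityMeasure (unifCube d) := by
  rw [unifCube]; infer_instance

lemma integral_pi_eq_prod {d : ℕ} (g : Fin d → ℝ → ℝ) :
    ∫ x, ∏ j, g j (x j) ∂(unifCube d) = ∏ j, ∫ t, g j t ∂unifSeg := by
  letI : MeasureSpace ℝ := ⟨unifSeg⟩
  haveI : SigmaFinite (volume : Measure ℝ) := inferInstanceAs (SigmaFinite unifSeg)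
  exact integral_fintype_prod_eq_prod g

lemma integrable_pi_prod {d : ℕ} (g : Fin d → ℝ → ℝ) (hg : ∀ j, Integrable (g j) unifSeg) :
    Integrable (fun x : Fin d → ℝ => ∏ j, g j (x j)) (unifCube d) := by
  letI : MeasureSpace ℝ := ⟨unifSeg⟩
  haveI : SigmaFinite (volume : Measure ℝ) := inferInstanceAs (SigmaFinite unifSeg)
  exact Integrable.fintype_prod hg

lemma pow_int_of_four {α : Type*} {mα : MeasurableSpace α} (μ : Measure α)
    [IsProbabilityMeasure μ] {g : α → ℝ} (hg : Measurable g)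
    (h4 : Integrable (fun t => g t ^ 4) μ) {e : ℕ} (he : e ≤ 4) :
    Integrable (fun t => g t ^ e) μ := by
  refine Integrable.mono ((integrable_const (1:ℝ)).add h4)
    ((hg.pow_const e).aestronglyMeasurable) ?_
  filter_upwards with a
  have h0 : (0:ℝ) ≤ g a ^ 4 := by positivity
  have hn : ‖(1:ℝ) + g a ^ 4‖ = 1 + g a ^ 4 := by
    rw [Real.norm_eq_abs, abs_of_nonneg (by linarith)]
  simp only [Pi.add_apply]
  rw [hn, Real.norm_eq_abs, abs_pow]
  rcases le_or_gt (|g a|) 1 with hle | hgt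
  · have := pow_le_one₀ (abs_nonneg _) hle (n := e)
    linarith
  · have h1 : |g a| ^ e ≤ |g a| ^ 4 := pow_le_pow_right₀ hgt.le he
    have h2 : |g a| ^ 4 = g a ^ 4 := by rw [← abs_pow, abs_of_nonneg h0]
    linarith [h2 ▸ h1]

lemma prod_if_mem {d : ℕ} (s : Finset (Fin d)) (a b : Fin d → ℝ) :
    ∏ j, (if j ∈ s then a j else b j) = (∏ j ∈ s, a j) * ∏ j ∈ sᶜ, b j := by
  rw [← Finset.prod_mul_prod_compl s]
  congr 1
  · exact Finset.prod_congr rfl (fun j hj => by simp [hj])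
  · exact Finset.prod_congr rfl (fun j hj => by simp [Finset.mem_compl.mp hj])

section Aux

variable {d : ℕ} (h : Fin d → ℝ → ℝ)

lemma glue_prod (s : Finset (Fin d)) (x y : Fin d → ℝ) :
    (∏ j, h j (glue s x y j)) = (∏ j ∈ s, h j (x j)) * ∏ j ∈ sᶜ, h j (y j) := by
  rw [← prod_if_mem]
  exact Finset.prod_congr rfl (fun j _ => by by_cases hj : j ∈ s <;> simp [glue, hj])

lemma factor1 (v : Finset (Fin d)) (x z : Fin d → ℝ) :
    ((∏ j, h j (x j)) - (∏ j ∈ v, h j (x j)) * ∏ j ∈ vᶜ, h j (z j)) ^ 2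
      = (∏ j, h j (x j) ^ 2)
          + (∏ j ∈ v, h j (x j) ^ 2) * (∏ j ∈ vᶜ, h j (z j) ^ 2)
          - 2 * (∏ j ∈ v, h j (x j) ^ 2) * ∏ j ∈ vᶜ, h j (x j) * h j (z j) := by
  have hx : (∏ j, h j (x j)) = (∏ j ∈ v, h j (x j)) * ∏ j ∈ vᶜ, h j (x j) :=
    (Finset.prod_mul_prod_compl v _).symm
  have hx2 : (∏ j, h j (x j) ^ 2) = (∏ j ∈ v, h j (x j) ^ 2) * ∏ j ∈ vᶜ, h j (x j) ^ 2 :=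
    (Finset.prod_mul_prod_compl v _).symm
  rw [hx, hx2]
  simp only [Finset.prod_pow, Finset.prod_mul_distrib]
  ring

lemma factor2 (u v' : Finset (Fin d)) (hv' : v' ⊆ uᶜ) (x y w : Fin d → ℝ) :
    ((∏ j ∈ u, h j (x j)) * (∏ j ∈ uᶜ, h j (y j))
        - (∏ j ∈ v', h j (y j)) * ∏ j ∈ v'ᶜ, h j (w j)) ^ 2
      = (∏ j ∈ u, h j (x j) ^ 2) * (∏ j ∈ uᶜ, h j (y j) ^ 2)
          + (∏ j ∈ v', h j (y j) ^ 2) * (∏ j ∈ v'ᶜ, h j (w j) ^ 2)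
          - 2 * (∏ j ∈ u, h j (x j) * h j (w j)) * (∏ j ∈ v', h j (y j) ^ 2)
              * ∏ j ∈ uᶜ ∩ v'ᶜ, h j (y j) * h j (w j) := by
  have hs1 : (uᶜ : Finset (Fin d)) = v' ∪ (uᶜ ∩ v'ᶜ) := by
    ext j
    simp only [Finset.mem_compl, Finset.mem_union, Finset.mem_inter]
    constructor
    · intro hj; by_cases hj' : j ∈ v' <;> simp [hj, hj']
    · rintro (hj | ⟨hj, _⟩)
      · exact Finset.mem_compl.mp (hv' hj)
      · exact hj
  have hs2 : (v'ᶜ : Finset (Fin d)) = u ∪ (uᶜ ∩ v'ᶜ) := by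
    ext j
    simp only [Finset.mem_compl, Finset.mem_union, Finset.mem_inter]
    constructor
    · intro hj; by_cases hj' : j ∈ u <;> simp [hj, hj']
    · rintro (hj | ⟨_, hj⟩)
      · intro hc; exact Finset.mem_compl.mp (hv' hc) hj
      · exact hj
  have hd1 : Disjoint v' (uᶜ ∩ v'ᶜ) :=
    Finset.disjoint_left.mpr (fun j hj hj' =>
      Finset.mem_compl.mp (Finset.mem_inter.mp hj').2 hj)
  have hd2 : Disjoint u (uᶜ ∩ v'ᶜ) :=
    Finset.disjoint_left.mpr (fun j hj hj' =>
      Finset.mem_compl.mp (Finset.mem_inter.mp hj').1 hj)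
  have hy : ∀ g : Fin d → ℝ, ∏ j ∈ uᶜ, g j = (∏ j ∈ v', g j) * ∏ j ∈ uᶜ ∩ v'ᶜ, g j := by
    intro g; rw [← Finset.prod_union hd1, ← hs1]
  have hw2 : ∀ g : Fin d → ℝ, ∏ j ∈ v'ᶜ, g j = (∏ j ∈ u, g j) * ∏ j ∈ uᶜ ∩ v'ᶜ, g j := by
    intro g; rw [← Finset.prod_union hd2, ← hs2]
  rw [hy (fun j => h j (y j)), hy (fun j => h j (y j) ^ 2),
    hw2 (fun j => h j (w j)), hw2 (fun j => h j (w j) ^ 2)]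
  simp only [Finset.prod_pow, Finset.prod_mul_distrib]
  ring

/-- products of powers of the `h j` along coordinates -/
noncomputable def Pw (e : Fin d → ℕ) (x : Fin d → ℝ) : ℝ := ∏ j, h j (x j) ^ e j

def chi (s : Finset (Fin d)) : Fin d → ℕ := fun j => if j ∈ s then 1 else 0

lemma Pw_mul (e e' : Fin d → ℕ) (x : Fin d → ℝ) :
    Pw h e x * Pw h e' x = Pw h (e + e') x := by
  simp [Pw, ← Finset.prod_mul_distrib, pow_add]

lemma Pw_zero (x : Fin d → ℝ) : Pw h 0 x = 1 := by simp [Pw]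

lemma Pw_one (x : Fin d → ℝ) : Pw h (fun _ => 1) x = ∏ j, h j (x j) := by simp [Pw]

lemma Pw_meas (hmeas : ∀ j, Measurable (h j)) (e : Fin d → ℕ) : Measurable (Pw h e) :=
  Finset.measurable_prod _ fun j _ => ((hmeas j).comp (measurable_pi_apply j)).pow_const _

lemma Pw_int (hmeas : ∀ j, Measurable (h j))
    (hint4 : ∀ j, Integrable (fun t => h j t ^ 4) unifSeg)
    (e : Fin d → ℕ) (he : ∀ j, e j ≤ 4) : Integrable (Pw h e) (unifCube d) :=
  integrable_pi_prod _ fun j => pow_int_of_four unifSeg (hmeas j) (hint4 j) (he j)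

lemma Pw_integral (e : Fin d → ℕ) :
    ∫ x, Pw h e x ∂(unifCube d) = ∏ j, ∫ t, h j t ^ e j ∂unifSeg := by
  simp only [Pw]
  exact integral_pi_eq_prod (fun j t => h j t ^ e j)

lemma Pw_chi (s : Finset (Fin d)) (x : Fin d → ℝ) :
    Pw h (chi s) x = ∏ j ∈ s, h j (x j) := by
  have : Pw h (chi s) x = ∏ j, (if j ∈ s then h j (x j) else 1) :=
    Finset.prod_congr rfl fun j _ => by by_cases hj : j ∈ s <;> simp [chi, hj]
  rw [this, prod_if_mem, Finset.prod_const_one, mul_one]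

/-- nested quadruple space -/
abbrev Gam (d : ℕ) := (Fin d → ℝ) × ((Fin d → ℝ) × ((Fin d → ℝ) × (Fin d → ℝ)))

noncomputable def nu4 (d : ℕ) : Measure (Gam d) :=
  (unifCube d).prod ((unifCube d).prod ((unifCube d).prod (unifCube d)))

instance (d : ℕ) : IsProbabilityMeasure (nu4 d) := by rw [nu4]; infer_instance

noncomputable def Mt (e : (Fin d → ℕ) × (Fin d → ℕ) × (Fin d → ℕ) × (Fin d → ℕ))
    (p : Gam d) : ℝ :=
  Pw h e.1 p.1 * (Pw h e.2.1 p.2.1 * (Pw h e.2.2.1 p.2.2.1 * Pw h e.2.2.2 p.2.2.2))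

lemma Mt_meas (hmeas : ∀ j, Measurable (h j)) (e) : Measurable (Mt h e) := by
  apply Measurable.mul
  · exact (Pw_meas h hmeas _).comp measurable_fst
  apply Measurable.mul
  · exact (Pw_meas h hmeas _).comp (measurable_fst.comp measurable_snd)
  apply Measurable.mul
  · exact (Pw_meas h hmeas _).comp (measurable_fst.comp (measurable_snd.comp measurable_snd))
  · exact (Pw_meas h hmeas _).comp (measurable_snd.comp (measurable_snd.comp measurable_snd))

lemma Mt_int (hmeas : ∀ j, Measurable (h j))
    (hint4 : ∀ j, Integrable (fun t => h j t ^ 4) unifSeg) (e)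
    (he : ∀ j, e.1 j ≤ 4 ∧ e.2.1 j ≤ 4 ∧ e.2.2.1 j ≤ 4 ∧ e.2.2.2 j ≤ 4) :
    Integrable (Mt h e) (nu4 d) := by
  have h1 := Pw_int h hmeas hint4 e.1 (fun j => (he j).1)
  have h2 := Pw_int h hmeas hint4 e.2.1 (fun j => (he j).2.1)
  have h3 := Pw_int h hmeas hint4 e.2.2.1 (fun j => (he j).2.2.1)
  have h4 := Pw_int h hmeas hint4 e.2.2.2 (fun j => (he j).2.2.2)
  exact h1.mul_prod (h2.mul_prod (h3.mul_prod h4))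

lemma Mt_integral (e) :
    ∫ p, Mt h e p ∂(nu4 d)
      = (∫ x, Pw h e.1 x ∂(unifCube d)) * ((∫ x, Pw h e.2.1 x ∂(unifCube d))
          * ((∫ x, Pw h e.2.2.1 x ∂(unifCube d)) * ∫ x, Pw h e.2.2.2 x ∂(unifCube d))) := by
  rw [nu4]
  simp only [Mt]
  rw [integral_prod_mul (f := Pw h e.1) (g := fun q : (Fin d → ℝ) × ((Fin d → ℝ) × (Fin d → ℝ)) =>
    Pw h e.2.1 q.1 * (Pw h e.2.2.1 q.2.1 * Pw h e.2.2.2 q.2.2))]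
  rw [integral_prod_mul (f := Pw h e.2.1) (g := fun r : (Fin d → ℝ) × (Fin d → ℝ) =>
    Pw h e.2.2.1 r.1 * Pw h e.2.2.2 r.2)]
  rw [integral_prod_mul (f := Pw h e.2.2.1) (g := Pw h e.2.2.2)]

lemma Mt_mul (e e') (p : Gam d) :
    Mt h e p * Mt h e' p
      = Mt h (e.1 + e'.1, e.2.1 + e'.2.1, e.2.2.1 + e'.2.2.1, e.2.2.2 + e'.2.2.2) p := by
  simp only [Mt, ← Pw_mul]
  ring

lemma integral_nu4 (F : Gam d → ℝ) (hF : Integrable F (nu4 d)) :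
    ∫ p, F p ∂(nu4 d)
      = ∫ x, ∫ y, ∫ z, ∫ w, F (x, (y, (z, w)))
          ∂(unifCube d) ∂(unifCube d) ∂(unifCube d) ∂(unifCube d) := by
  rw [nu4] at hF ⊢
  rw [integral_prod _ hF]
  refine integral_congr_ae ?_
  filter_upwards [hF.prod_right_ae] with x hx
  rw [integral_prod _ hx]
  refine integral_congr_ae ?_
  filter_upwards [hx.prod_right_ae] with y hy
  rw [integral_prod _ hy]

/-- the one-observation integrand -/
noncomputable def Gfun (f : (Fin d → ℝ) → ℝ) (u v v' : Finset (Fin d)) (p : Gam d) : ℝ :=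
  (f p.1 - f (glue v p.1 p.2.2.1)) * (f (glue u p.1 p.2.1) - f (glue v' p.2.1 p.2.2.2))

def csgn : Fin 4 → ℝ := ![1, -1, -1, 1]

def Es (u v v' : Finset (Fin d)) (t : Fin 4) :
    (Fin d → ℕ) × (Fin d → ℕ) × (Fin d → ℕ) × (Fin d → ℕ) :=
  if t = 0 then ((chi univ + chi u : Fin d → ℕ), chi uᶜ, 0, 0)
  else if t = 1 then (chi univ, chi v', 0, chi v'ᶜ)
  else if t = 2 then ((chi v + chi u : Fin d → ℕ), chi uᶜ, chi vᶜ, 0)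
  else (chi v, chi v', chi vᶜ, chi v'ᶜ)

lemma chi_le_one (s : Finset (Fin d)) (j : Fin d) : chi s j ≤ 1 := by
  unfold chi; split <;> omega

lemma Es_bound (u v v' : Finset (Fin d)) (t : Fin 4) (j : Fin d) :
    (Es u v v' t).1 j ≤ 2 ∧ (Es u v v' t).2.1 j ≤ 2
      ∧ (Es u v v' t).2.2.1 j ≤ 2 ∧ (Es u v v' t).2.2.2 j ≤ 2 := by
  have hc := chi_le_one (d := d)
  unfold Es
  split_ifs <;>
    refine ⟨?_, ?_, ?_, ?_⟩ <;>
    simp only [Pi.add_apply, Pi.zero_apply] <;>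
    first
      | omega
      | (have := hc univ j; have := hc u j; have := hc uᶜ j; have := hc v j; have := hc vᶜ j;
         have := hc v' j; have := hc v'ᶜ j; omega)

lemma G_decomp (f : (Fin d → ℝ) → ℝ) (hf : f = fun x => ∏ j, h j (x j))
    (u v v' : Finset (Fin d)) (p : Gam d) :
    Gfun f u v v' p = ∑ t, csgn t * Mt h (Es u v v' t) p := by
  have e0 : Es u v v' 0 = ((chi univ + chi u : Fin d → ℕ), chi uᶜ, 0, 0) := rfl
  have e1 : Es u v v' 1 = (chi univ, chi v', 0, chi v'ᶜ) := rfl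
  have e2 : Es u v v' 2 = ((chi v + chi u : Fin d → ℕ), chi uᶜ, chi vᶜ, 0) := rfl
  have e3 : Es u v v' 3 = (chi v, chi v', chi vᶜ, chi v'ᶜ) := rfl
  have c0 : csgn 0 = 1 := rfl
  have c1 : csgn 1 = -1 := rfl
  have c2 : csgn 2 = -1 := rfl
  have c3 : csgn 3 = 1 := rfl
  simp only [Gfun, hf, Fin.sum_univ_four, e0, e1, e2, e3, c0, c1, c2, c3, Mt]
  rw [glue_prod, glue_prod, glue_prod]
  simp only [← Pw_chi, ← Pw_mul, Pw_zero]
  ring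

lemma G_meas (f : (Fin d → ℝ) → ℝ) (hf : f = fun x => ∏ j, h j (x j))
    (hmeas : ∀ j, Measurable (h j)) (u v v' : Finset (Fin d)) :
    Measurable (Gfun f u v v') := by
  have hfm : Measurable f := by
    rw [hf]
    exact Finset.measurable_prod _ fun j _ => (hmeas j).comp (measurable_pi_apply j)
  have hglue : ∀ s : Finset (Fin d), Measurable fun p : (Fin d → ℝ) × (Fin d → ℝ) =>
      glue s p.1 p.2 := by
    intro s
    apply measurable_pi_lambda
    intro j
    by_cases hj : j ∈ s <;> simp only [glue, hj, if_true, if_false]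
    · exact (measurable_pi_apply j).comp measurable_fst
    · exact (measurable_pi_apply j).comp measurable_snd
  apply Measurable.mul
  · exact (hfm.comp measurable_fst).sub
      (hfm.comp ((hglue v).comp (measurable_fst.prodMk
        (measurable_fst.comp (measurable_snd.comp measurable_snd)))))
  · exact (hfm.comp ((hglue u).comp (measurable_fst.prodMk
      (measurable_fst.comp measurable_snd)))).sub
      (hfm.comp ((hglue v').comp ((measurable_fst.comp measurable_snd).prodMk
        (measurable_snd.comp (measurable_snd.comp measurable_snd)))))

lemma G_sq_decomp (f : (Fin d → ℝ) → ℝ) (hf : f = fun x => ∏ j, h j (x j))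
    (u v v' : Finset (Fin d)) (p : Gam d) :
    Gfun f u v v' p ^ 2
      = ∑ t : Fin 4, ∑ t' : Fin 4, (csgn t * csgn t')
          * Mt h ((Es u v v' t).1 + (Es u v v' t').1,
              (Es u v v' t).2.1 + (Es u v v' t').2.1,
              (Es u v v' t).2.2.1 + (Es u v v' t').2.2.1,
              (Es u v v' t).2.2.2 + (Es u v v' t').2.2.2) p := by
  rw [G_decomp h f hf u v v' p, sq, Finset.sum_mul_sum]
  refine Finset.sum_congr rfl fun t _ => Finset.sum_congr rfl fun t' _ => ?_
  rw [mul_mul_mul_comm, Mt_mul]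

lemma G_int (hmeas : ∀ j, Measurable (h j))
    (hint4 : ∀ j, Integrable (fun t => h j t ^ 4) unifSeg)
    (f : (Fin d → ℝ) → ℝ) (hf : f = fun x => ∏ j, h j (x j)) (u v v' : Finset (Fin d)) :
    Integrable (Gfun f u v v') (nu4 d) := by
  rw [funext (G_decomp h f hf u v v')]
  refine integrable_finset_sum _ fun t _ => Integrable.const_mul ?_ _
  refine Mt_int h hmeas hint4 _ fun j => ?_
  have := Es_bound u v v' t j
  exact ⟨by omega, by omega, by omega, by omega⟩

lemma G_sq_int (hmeas : ∀ j, Measurable (h j))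
    (hint4 : ∀ j, Integrable (fun t => h j t ^ 4) unifSeg)
    (f : (Fin d → ℝ) → ℝ) (hf : f = fun x => ∏ j, h j (x j)) (u v v' : Finset (Fin d)) :
    Integrable (fun p => Gfun f u v v' p ^ 2) (nu4 d) := by
  rw [funext (G_sq_decomp h f hf u v v')]
  refine integrable_finset_sum _ fun t _ => integrable_finset_sum _ fun t' _ =>
    Integrable.const_mul ?_ _
  refine Mt_int h hmeas hint4 _ fun j => ?_
  have h1 := Es_bound u v v' t j
  have h2 := Es_bound u v v' t' j
  refine ⟨?_, ?_, ?_, ?_⟩ <;> simp only [Pi.add_apply] <;> omega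

lemma hI0 (j : Fin d) : (∫ t, h j t ^ 0 ∂unifSeg) = 1 := by
  simp

lemma prod4_eq (a b c e g : Fin d → ℝ) (hj : ∀ j, a j * b j * c j * e j = g j) :
    (∏ j, a j) * ((∏ j, b j) * ((∏ j, c j) * ∏ j, e j)) = ∏ j, g j := by
  simp only [← Finset.prod_mul_distrib]
  exact Finset.prod_congr rfl fun j _ => by rw [← hj j]; ring

lemma G_Q (f : (Fin d → ℝ) → ℝ) (hf : f = fun x => ∏ j, h j (x j))
    (u v v' : Finset (Fin d)) (hv' : v' ⊆ uᶜ) (x y z w : Fin d → ℝ) :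
    ((∏ j, h j (x j) ^ 2)
        + (∏ j ∈ v, h j (x j) ^ 2) * (∏ j ∈ vᶜ, h j (z j) ^ 2)
        - 2 * (∏ j ∈ v, h j (x j) ^ 2) * ∏ j ∈ vᶜ, h j (x j) * h j (z j))
      * ((∏ j ∈ u, h j (x j) ^ 2) * (∏ j ∈ uᶜ, h j (y j) ^ 2)
          + (∏ j ∈ v', h j (y j) ^ 2) * (∏ j ∈ v'ᶜ, h j (w j) ^ 2)
          - 2 * (∏ j ∈ u, h j (x j) * h j (w j)) * (∏ j ∈ v', h j (y j) ^ 2)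
              * ∏ j ∈ uᶜ ∩ v'ᶜ, h j (y j) * h j (w j))
      = Gfun f u v v' (x, (y, (z, w))) ^ 2 := by
  rw [← factor1 h v x z, ← factor2 h u v' hv' x y w, ← mul_pow]
  simp only [Gfun, hf]
  rw [glue_prod, glue_prod, glue_prod]

lemma G_integral (hmeas : ∀ j, Measurable (h j))
    (hint4 : ∀ j, Integrable (fun t => h j t ^ 4) unifSeg)
    (f : (Fin d → ℝ) → ℝ) (hf : f = fun x => ∏ j, h j (x j))
    (u v v' : Finset (Fin d)) (hv : v ⊆ uᶜ) (hv' : v' ⊆ uᶜ) :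
    ∫ p, Gfun f u v v' p ∂(nu4 d)
      = (∏ j, (if j ∈ u then ∫ t, h j t ^ 2 ∂unifSeg else (∫ t, h j t ^ 1 ∂unifSeg) ^ 2))
          - ∏ j, (∫ t, h j t ^ 1 ∂unifSeg) ^ 2 := by
  have hMint : ∀ t : Fin 4, Integrable (fun p => csgn t * Mt h (Es u v v' t) p) (nu4 d) := by
    intro t
    refine Integrable.const_mul ?_ _
    refine Mt_int h hmeas hint4 _ fun j => ?_
    have := Es_bound u v v' t j
    exact ⟨by omega, by omega, by omega, by omega⟩
  rw [funext (G_decomp h f hf u v v')]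
  rw [integral_finset_sum _ (fun t _ => hMint t)]
  simp only [integral_const_mul, Mt_integral, Pw_integral]
  have e0 : Es u v v' 0 = ((chi univ + chi u : Fin d → ℕ), chi uᶜ, 0, 0) := rfl
  have e1 : Es u v v' 1 = (chi univ, chi v', 0, chi v'ᶜ) := rfl
  have e2 : Es u v v' 2 = ((chi v + chi u : Fin d → ℕ), chi uᶜ, chi vᶜ, 0) := rfl
  have e3 : Es u v v' 3 = (chi v, chi v', chi vᶜ, chi v'ᶜ) := rfl
  have c0 : csgn 0 = 1 := rfl
  have c1 : csgn 1 = -1 := rfl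
  have c2 : csgn 2 = -1 := rfl
  have c3 : csgn 3 = 1 := rfl
  rw [Fin.sum_univ_four, e0, e1, e2, e3, c0, c1, c2, c3]
  have hvu : ∀ j, j ∈ v → j ∉ u := fun j hj => Finset.mem_compl.mp (hv hj)
  have ht0 : (∏ j, ∫ t, h j t ^ (chi univ + chi u : Fin d → ℕ) j ∂unifSeg)
      * ((∏ j, ∫ t, h j t ^ chi uᶜ j ∂unifSeg)
        * ((∏ j, ∫ t, h j t ^ (0 : Fin d → ℕ) j ∂unifSeg)
          * ∏ j, ∫ t, h j t ^ (0 : Fin d → ℕ) j ∂unifSeg))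
      = ∏ j, (if j ∈ u then ∫ t, h j t ^ 2 ∂unifSeg else (∫ t, h j t ^ 1 ∂unifSeg) ^ 2) := by
    refine prod4_eq _ _ _ _ _ fun j => ?_
    by_cases hj : j ∈ u <;>
      simp [chi, hj, hI0 h j] <;> ring
  have ht1 : (∏ j, ∫ t, h j t ^ chi univ j ∂unifSeg)
      * ((∏ j, ∫ t, h j t ^ chi v' j ∂unifSeg)
        * ((∏ j, ∫ t, h j t ^ (0 : Fin d → ℕ) j ∂unifSeg)
          * ∏ j, ∫ t, h j t ^ chi v'ᶜ j ∂unifSeg))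
      = ∏ j, (∫ t, h j t ^ 1 ∂unifSeg) ^ 2 := by
    refine prod4_eq _ _ _ _ _ fun j => ?_
    by_cases hj : j ∈ v' <;>
      simp [chi, hj, hI0 h j] <;> ring
  have ht2 : (∏ j, ∫ t, h j t ^ (chi v + chi u : Fin d → ℕ) j ∂unifSeg)
      * ((∏ j, ∫ t, h j t ^ chi uᶜ j ∂unifSeg)
        * ((∏ j, ∫ t, h j t ^ chi vᶜ j ∂unifSeg)
          * ∏ j, ∫ t, h j t ^ (0 : Fin d → ℕ) j ∂unifSeg))
      = ∏ j, (∫ t, h j t ^ 1 ∂unifSeg) ^ 2 := by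
    refine prod4_eq _ _ _ _ _ fun j => ?_
    by_cases hj : j ∈ u
    · have hjv : j ∉ v := fun hc => hvu j hc hj
      simp [chi, hj, hjv, hI0 h j] <;> ring
    · by_cases hjv : j ∈ v <;> simp [chi, hj, hjv, hI0 h j] <;> ring
  have ht3 : (∏ j, ∫ t, h j t ^ chi v j ∂unifSeg)
      * ((∏ j, ∫ t, h j t ^ chi v' j ∂unifSeg)
        * ((∏ j, ∫ t, h j t ^ chi vᶜ j ∂unifSeg)
          * ∏ j, ∫ t, h j t ^ chi v'ᶜ j ∂unifSeg))
      = ∏ j, (∫ t, h j t ^ 1 ∂unifSeg) ^ 2 := by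
    refine prod4_eq _ _ _ _ _ fun j => ?_
    by_cases hj : j ∈ v <;> by_cases hj' : j ∈ v' <;>
      simp [chi, hj, hj', hI0 h j] <;> ring
  rw [ht0, ht1, ht2, ht3]
  ring

lemma lowerSobol_eq (f : (Fin d → ℝ) → ℝ) (hf : f = fun x => ∏ j, h j (x j))
    (u : Finset (Fin d)) :
    lowerSobol f u
      = (∏ j, (if j ∈ u then ∫ t, h j t ^ 2 ∂unifSeg else (∫ t, h j t ^ 1 ∂unifSeg) ^ 2))
          - ∏ j, (∫ t, h j t ^ 1 ∂unifSeg) ^ 2 := by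
  rw [lowerSobol]
  have hmu : ∫ x, f x ∂(unifCube d) = ∏ j, ∫ t, h j t ^ 1 ∂unifSeg := by
    simp only [hf, pow_one]
    exact integral_pi_eq_prod h
  have hinner : ∀ x, (∫ y, f (glue u x y) ∂(unifCube d))
      = ∏ j, (if j ∈ u then h j (x j) else ∫ t, h j t ^ 1 ∂unifSeg) := by
    intro x
    simp only [hf]
    have hpt : ∀ y : Fin d → ℝ, (∏ j, h j (glue u x y j))
        = ∏ j, (if j ∈ u then h j (x j) else h j (y j)) := fun y =>
      Finset.prod_congr rfl fun j _ => by by_cases hj : j ∈ u <;> simp [glue, hj]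
    simp only [hpt]
    rw [integral_pi_eq_prod (fun j t => if j ∈ u then h j (x j) else h j t)]
    refine Finset.prod_congr rfl fun j _ => ?_
    by_cases hj : j ∈ u <;> simp [hj]
  simp only [hinner]
  have hsq : ∀ x : Fin d → ℝ, (∏ j, (if j ∈ u then h j (x j) else ∫ t, h j t ^ 1 ∂unifSeg)) ^ 2
      = ∏ j, (if j ∈ u then h j (x j) ^ 2 else (∫ t, h j t ^ 1 ∂unifSeg) ^ 2) := by
    intro x
    rw [← Finset.prod_pow]
    exact Finset.prod_congr rfl fun j _ => by by_cases hj : j ∈ u <;> simp [hj]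
  simp only [hsq]
  rw [integral_pi_eq_prod (fun j t => if j ∈ u then h j t ^ 2 else (∫ s, h j s ^ 1 ∂unifSeg) ^ 2),
    hmu, ← Finset.prod_pow]
  congr 1
  refine Finset.prod_congr rfl fun j _ => ?_
  by_cases hj : j ∈ u <;> simp [hj]

end Aux

theorem stmt3 {d : ℕ} (hd : 1 ≤ d) (h : Fin d → ℝ → ℝ)
    (hmeas : ∀ j, Measurable (h j))
    (hint4 : ∀ j, Integrable (fun t => h j t ^ 4) unifSeg)
    (u v v' : Finset (Fin d)) (hv : v ⊆ uᶜ) (hv' : v' ⊆ uᶜ)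
    (n : ℕ) (hn : 0 < n)
    {Ω : Type*} [MeasurableSpace Ω] (P : Measure Ω) [IsProbabilityMeasure P]
    -- `X (i, 0) = xᵢ`, `X (i, 1) = yᵢ`, `X (i, 2) = zᵢ`, `X (i, 3) = wᵢ`:
    -- i.i.d. quadruples whose four components are independent, i.e. the whole
    -- family of `4 n` random vectors is independent and uniform on `[0,1]^d`.
    (X : Fin n × Fin 4 → Ω → (Fin d → ℝ))
    (hXmeas : ∀ i, Measurable (X i))
    (hXindep : iIndepFun X P)
    (hXunif : ∀ i, Measure.map (X i) P = unifCube d)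
    -- the product-form integrand `f` and the generalized estimator `est`
    (f : (Fin d → ℝ) → ℝ) (hf : f = fun x => ∏ j, h j (x j))
    (est : Ω → ℝ)
    (hest : est = fun ω => (1 / (n : ℝ)) * ∑ i : Fin n,
        (f (X (i, 0) ω) - f (glue v (X (i, 0) ω) (X (i, 2) ω)))
          * (f (glue u (X (i, 0) ω) (X (i, 1) ω))
              - f (glue v' (X (i, 1) ω) (X (i, 3) ω)))) :
    (n : ℝ) * variance est P
      = (∫ x, ∫ y, ∫ z, ∫ w,
            ((∏ j, h j (x j) ^ 2)
              + (∏ j ∈ v, h j (x j) ^ 2) * (∏ j ∈ vᶜ, h j (z j) ^ 2)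
              - 2 * (∏ j ∈ v, h j (x j) ^ 2) * ∏ j ∈ vᶜ, h j (x j) * h j (z j))
          * ((∏ j ∈ u, h j (x j) ^ 2) * (∏ j ∈ uᶜ, h j (y j) ^ 2)
              + (∏ j ∈ v', h j (y j) ^ 2) * (∏ j ∈ v'ᶜ, h j (w j) ^ 2)
              - 2 * (∏ j ∈ u, h j (x j) * h j (w j))
                  * (∏ j ∈ v', h j (y j) ^ 2)
                  * ∏ j ∈ uᶜ ∩ v'ᶜ, h j (y j) * h j (w j))
            ∂(unifCube d) ∂(unifCube d) ∂(unifCube d) ∂(unifCube d))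
        - (lowerSobol f u) ^ 2 := by
  classical
  have hnR : ((n : ℝ)) ≠ 0 := Nat.cast_ne_zero.mpr hn.ne'
  set W : Fin n → Ω → Gam d :=
    fun i ω => (X (i, 0) ω, (X (i, 1) ω, (X (i, 2) ω, X (i, 3) ω))) with hW
  have hWmeas : ∀ i, Measurable (W i) := fun i =>
    (hXmeas (i, 0)).prodMk ((hXmeas (i, 1)).prodMk
      ((hXmeas (i, 2)).prodMk (hXmeas (i, 3))))
  have hGmeas : Measurable (Gfun f u v v') := G_meas h f hf hmeas u v v'
  have hGint : Integrable (Gfun f u v v') (nu4 d) := G_int h hmeas hint4 f hf u v v'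
  have hG2int : Integrable (fun p => Gfun f u v v' p ^ 2) (nu4 d) :=
    G_sq_int h hmeas hint4 f hf u v v'
  -- the law of each quadruple
  have hlaw23 : ∀ i : Fin n, Measure.map (fun ω => (X (i, 2) ω, X (i, 3) ω)) P
      = (unifCube d).prod (unifCube d) := by
    intro i
    have hne : ((i, 2) : Fin n × Fin 4) ≠ (i, 3) := by simp
    have hind : IndepFun (X (i, 2)) (X (i, 3)) P := hXindep.indepFun hne
    have e1 := (indepFun_iff_map_prod_eq_prod_map_map (hXmeas (i, 2)).aemeasurable
      (hXmeas (i, 3)).aemeasurable).mp hind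
    rw [hXunif (i, 2), hXunif (i, 3)] at e1
    exact e1
  have hlaw123 : ∀ i : Fin n,
      Measure.map (fun ω => (X (i, 1) ω, (X (i, 2) ω, X (i, 3) ω))) P
        = (unifCube d).prod ((unifCube d).prod (unifCube d)) := by
    intro i
    have hind : IndepFun (X (i, 1)) (fun ω => (X (i, 2) ω, X (i, 3) ω)) P :=
      (hXindep.indepFun_prodMk hXmeas (i, 2) (i, 3) (i, 1) (by simp) (by simp)).symm
    have e1 := (indepFun_iff_map_prod_eq_prod_map_map (hXmeas (i, 1)).aemeasurable
      ((hXmeas (i, 2)).prodMk (hXmeas (i, 3))).aemeasurable).mp hind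
    rw [hXunif (i, 1), hlaw23 i] at e1
    exact e1
  have hlaw : ∀ i : Fin n, Measure.map (W i) P = nu4 d := by
    intro i
    have hST : Disjoint ({(i, 0)} : Finset (Fin n × Fin 4)) {(i, 1), (i, 2), (i, 3)} := by
      refine Finset.disjoint_left.mpr ?_
      intro a ha hb
      simp only [Finset.mem_singleton] at ha
      simp only [Finset.mem_insert, Finset.mem_singleton] at hb
      subst ha
      rcases hb with hb | hb | hb <;> simpa using congrArg Prod.snd hb
    have hbase := hXindep.indepFun_finset {(i, 0)} {(i, 1), (i, 2), (i, 3)} hST hXmeas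
    have hφm : Measurable
        (fun g : (({(i, 0)} : Finset (Fin n × Fin 4)) → (Fin d → ℝ)) =>
          g ⟨(i, 0), Finset.mem_singleton_self _⟩) := measurable_pi_apply _
    have hψm : Measurable
        (fun g : (({(i, 1), (i, 2), (i, 3)} : Finset (Fin n × Fin 4)) → (Fin d → ℝ)) =>
          (g ⟨(i, 1), by simp⟩, (g ⟨(i, 2), by simp⟩, g ⟨(i, 3), by simp⟩))) :=
      (measurable_pi_apply _).prodMk
        ((measurable_pi_apply _).prodMk (measurable_pi_apply _))
    have hind0 : IndepFun (X (i, 0))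
        (fun ω => (X (i, 1) ω, (X (i, 2) ω, X (i, 3) ω))) P := hbase.comp hφm hψm
    have e1 := (indepFun_iff_map_prod_eq_prod_map_map (hXmeas (i, 0)).aemeasurable
      ((hXmeas (i, 1)).prodMk ((hXmeas (i, 2)).prodMk (hXmeas (i, 3)))).aemeasurable).mp hind0
    rw [hXunif (i, 0), hlaw123 i] at e1
    exact e1
  -- pairwise independence of the summands
  have hTind : ∀ i j : Fin n, i ≠ j →
      IndepFun (fun ω => Gfun f u v v' (W i ω)) (fun ω => Gfun f u v v' (W j ω)) P := by
    intro i j hij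
    have hST : Disjoint ({(i, 0), (i, 1), (i, 2), (i, 3)} : Finset (Fin n × Fin 4))
        {(j, 0), (j, 1), (j, 2), (j, 3)} := by
      refine Finset.disjoint_left.mpr ?_
      intro a ha hb
      simp only [Finset.mem_insert, Finset.mem_singleton] at ha hb
      have h1 : a.1 = i := by rcases ha with rfl | rfl | rfl | rfl <;> rfl
      have h2 : a.1 = j := by rcases hb with rfl | rfl | rfl | rfl <;> rfl
      exact hij (h1.symm.trans h2)
    have hbase := hXindep.indepFun_finset _ _ hST hXmeas
    have hψim : Measurable
        (fun g : (({(i, 0), (i, 1), (i, 2), (i, 3)} : Finset (Fin n × Fin 4)) → (Fin d → ℝ)) =>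
          Gfun f u v v' (g ⟨(i, 0), by simp⟩,
            (g ⟨(i, 1), by simp⟩, (g ⟨(i, 2), by simp⟩, g ⟨(i, 3), by simp⟩)))) :=
      hGmeas.comp ((measurable_pi_apply _).prodMk ((measurable_pi_apply _).prodMk
        ((measurable_pi_apply _).prodMk (measurable_pi_apply _))))
    have hψjm : Measurable
        (fun g : (({(j, 0), (j, 1), (j, 2), (j, 3)} : Finset (Fin n × Fin 4)) → (Fin d → ℝ)) =>
          Gfun f u v v' (g ⟨(j, 0), by simp⟩,
            (g ⟨(j, 1), by simp⟩, (g ⟨(j, 2), by simp⟩, g ⟨(j, 3), by simp⟩)))) :=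
      hGmeas.comp ((measurable_pi_apply _).prodMk ((measurable_pi_apply _).prodMk
        ((measurable_pi_apply _).prodMk (measurable_pi_apply _))))
    exact hbase.comp hψim hψjm
  -- second moments
  have hGmem : MemLp (Gfun f u v v') 2 (nu4 d) :=
    (memLp_two_iff_integrable_sq hGmeas.aestronglyMeasurable).mpr hG2int
  have hTmem : ∀ i : Fin n, MemLp (fun ω => Gfun f u v v' (W i ω)) 2 P := by
    intro i
    have h2 : MemLp (Gfun f u v v') 2 (Measure.map (W i) P) := by
      rw [hlaw i]; exact hGmem
    exact (memLp_map_measure_iff hGmeas.aestronglyMeasurable (hWmeas i).aemeasurable).mp h2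
  -- moments transferred to `nu4`
  have hM1 : ∀ i : Fin n, ∫ ω, Gfun f u v v' (W i ω) ∂P
      = ∫ p, Gfun f u v v' p ∂(nu4 d) := by
    intro i
    rw [← hlaw i, integral_map (hWmeas i).aemeasurable hGmeas.aestronglyMeasurable]
  have hM2 : ∀ i : Fin n, ∫ ω, Gfun f u v v' (W i ω) ^ 2 ∂P
      = ∫ p, Gfun f u v v' p ^ 2 ∂(nu4 d) := by
    intro i
    rw [← hlaw i, integral_map (hWmeas i).aemeasurable
      ((hGmeas.pow_const 2).aestronglyMeasurable)]
  have hTvar : ∀ i : Fin n, variance (fun ω => Gfun f u v v' (W i ω)) P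
      = (∫ p, Gfun f u v v' p ^ 2 ∂(nu4 d)) - (∫ p, Gfun f u v v' p ∂(nu4 d)) ^ 2 := by
    intro i
    rw [variance_eq_sub (hTmem i)]
    simp only [Pi.pow_apply]
    rw [hM2 i, hM1 i]
  -- rewriting the estimator
  have hestW : est = ((1 : ℝ) / n) • ∑ i : Fin n, (fun ω => Gfun f u v v' (W i ω)) := by
    funext ω
    rw [hest]
    simp only [Pi.smul_apply, Finset.sum_apply, smul_eq_mul]
    exact congrArg _ (Finset.sum_congr rfl fun i _ => rfl)
  have hvarsum : variance (∑ i : Fin n, (fun ω => Gfun f u v v' (W i ω))) P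
      = ∑ i : Fin n, variance (fun ω => Gfun f u v v' (W i ω)) P :=
    IndepFun.variance_sum (fun i _ => hTmem i) (fun i _ j _ hij => hTind i j hij)
  have hLHS : (n : ℝ) * variance est P
      = (∫ p, Gfun f u v v' p ^ 2 ∂(nu4 d)) - (∫ p, Gfun f u v v' p ∂(nu4 d)) ^ 2 := by
    rw [hestW, variance_smul, hvarsum]
    simp only [hTvar]
    rw [Finset.sum_const, Finset.card_univ, Fintype.card_fin, nsmul_eq_mul]
    field_simp
  rw [hLHS]
  -- identifying the two integrals
  have hiter : (∫ x, ∫ y, ∫ z, ∫ w,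
        ((∏ j, h j (x j) ^ 2)
          + (∏ j ∈ v, h j (x j) ^ 2) * (∏ j ∈ vᶜ, h j (z j) ^ 2)
          - 2 * (∏ j ∈ v, h j (x j) ^ 2) * ∏ j ∈ vᶜ, h j (x j) * h j (z j))
      * ((∏ j ∈ u, h j (x j) ^ 2) * (∏ j ∈ uᶜ, h j (y j) ^ 2)
          + (∏ j ∈ v', h j (y j) ^ 2) * (∏ j ∈ v'ᶜ, h j (w j) ^ 2)
          - 2 * (∏ j ∈ u, h j (x j) * h j (w j))
              * (∏ j ∈ v', h j (y j) ^ 2)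
              * ∏ j ∈ uᶜ ∩ v'ᶜ, h j (y j) * h j (w j))
        ∂(unifCube d) ∂(unifCube d) ∂(unifCube d) ∂(unifCube d))
      = ∫ p, Gfun f u v v' p ^ 2 ∂(nu4 d) := by
    rw [integral_nu4 (fun p => Gfun f u v v' p ^ 2) hG2int]
    simp only [G_Q h f hf u v v' hv']
  have hlow : lowerSobol f u = ∫ p, Gfun f u v v' p ∂(nu4 d) :=
    (lowerSobol_eq h f hf u).trans (G_integral h hmeas hint4 f hf u v v' hv hv').symm
  rw [hiter, hlow]
end
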